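/- For every 0 < r < 1 and every positive integer N there exists a finite set X_{r,N} ⊂ Δ(0,r) ⊂ C^n such that every polynomial P of degree ≤ N with sup_{Δ(0,1)} |P| ≥ 1 satisfies max_{z ∈ X_{r,N}} |P(z)| ≥ (1/2) r^N. In particular, a maximal ε-distinguishable subset of Δ(0,r) with ε = ((1−r)/(2N)) r^N has this property. -/

import Mathlib

/-- The open polydisk of radius `R` centered at `a` in `ℂⁿ`. -/
def polydisk (n : ℕ) (a : Fin n → ℂ) (R : ℝ) : Set (Fin n → ℂ) :=
  {z | ∀ j, ‖z j - a j‖ < R}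

open Metric Set Filter

lemma mem_polydisk_zero {n : ℕ} {R : ℝ} {z : Fin n → ℂ} :
    z ∈ polydisk n 0 R ↔ ∀ j, ‖z j‖ < R := by
  simp [polydisk]

lemma polydisk_zero_eq {n : ℕ} {R : ℝ} :
    polydisk n 0 R = Set.pi Set.univ (fun _ : Fin n => ball (0 : ℂ) R) := by
  ext z
  simp [polydisk, Complex.dist_eq]

lemma core_lemma (n : ℕ) (r : ℝ) (hr0 : 0 < r) (hr1 : r < 1)
    (N : ℕ) (hN : 0 < N)
    (Y : Finset (Fin n → ℂ)) (hYsub : ∀ z ∈ Y, z ∈ polydisk n 0 r)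
    (hcover : ∀ x ∈ polydisk n 0 r, ∃ y ∈ Y, dist x y ≤ ((1 - r) / (2 * N)) * r ^ N)
    (P : MvPolynomial (Fin n) ℂ) (hP : P.totalDegree ≤ N)
    (hsup : ∃ w : Fin n → ℂ, (∀ j, ‖w j‖ ≤ 1) ∧ 1 ≤ ‖MvPolynomial.eval w P‖) :
    ∃ z ∈ Y, (1 / 2) * r ^ N ≤ ‖MvPolynomial.eval z P‖ := by
  set ε : ℝ := ((1 - r) / (2 * N)) * r ^ N with hε_def
  have h1r : (0 : ℝ) < 1 - r := by linarith
  have hNpos : (0 : ℝ) < N := by exact_mod_cast hN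
  have hrN : (0 : ℝ) < r ^ N := pow_pos hr0 N
  have hε0 : 0 < ε := by positivity
  set F : (Fin n → ℂ) → ℂ := fun z => MvPolynomial.eval z P with hF_def
  have hFan : AnalyticOnNhd ℂ F Set.univ := AnalyticOnNhd.eval_mvPolynomial P
  have hFdiff : Differentiable ℂ F := fun x => (hFan x (mem_univ x)).differentiableAt
  -- the closed unit polydisk is compact
  set K1 : Set (Fin n → ℂ) := {w | ∀ j, ‖w j‖ ≤ 1} with hK1_def
  have hK1eq : K1 = Set.pi Set.univ (fun _ : Fin n => closedBall (0 : ℂ) 1) := by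
    ext z; simp [hK1_def, Complex.dist_eq]
  have hK1c : IsCompact K1 := by
    rw [hK1eq]; exact isCompact_univ_pi fun _ => isCompact_closedBall 0 1
  have hK1ne : K1.Nonempty := ⟨0, fun j => by simp⟩
  obtain ⟨w₀, hw₀K, hw₀max'⟩ :=
    hK1c.exists_isMaxOn hK1ne (hFdiff.continuous.norm.continuousOn)
  have hw₀max : ∀ y ∈ K1, ‖F y‖ ≤ ‖F w₀‖ := hw₀max'
  set M : ℝ := ‖F w₀‖ with hM_def
  obtain ⟨w, hwK, hw1⟩ := hsup
  have hM1 : 1 ≤ M := le_trans hw1 (hw₀max w hwK)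
  have hM0 : 0 ≤ M := by linarith
  -- gradient bound on the polydisk of radius r
  have hgrad : ∀ z ∈ polydisk n 0 r, ‖fderiv ℂ F z‖ ≤ M / (1 - r) := by
    intro z hz
    apply ContinuousLinearMap.opNorm_le_bound _ (div_nonneg hM0 h1r.le)
    intro u
    rcases eq_or_ne u 0 with rfl | hu
    · simp
    have hd : (0 : ℝ) < ‖u‖ := norm_pos_iff.2 hu
    set ρ : ℝ := (1 - r) / ‖u‖ with hρ_def
    have hρ0 : 0 < ρ := div_pos h1r hd
    set h : ℂ → ℂ := fun t => F (z + t • u) with hh_def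
    have hline : Differentiable ℂ fun t : ℂ => z + t • u :=
      (differentiable_id.smul_const u).const_add z
    have hhd : Differentiable ℂ h := hFdiff.comp hline
    have hderiv : HasDerivAt h (fderiv ℂ F z u) 0 := by
      have h1 : HasDerivAt (fun t : ℂ => z + t • u) u 0 := by
        simpa using ((hasDerivAt_id (0 : ℂ)).smul_const u).const_add z
      have h2 : HasDerivAt (fun t : ℂ => F (z + t • u)) (fderiv ℂ F (z + (0:ℂ) • u) u) 0 :=
        (hFdiff _).hasFDerivAt.comp_hasDerivAt 0 h1
      simpa [hh_def] using h2
    have hsph : ∀ t ∈ sphere (0 : ℂ) ρ, ‖h t‖ ≤ M := by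
      intro t ht
      have htabs : ‖t‖ = ρ := by
        simpa [Complex.dist_eq] using ht
      apply hw₀max
      intro j
      have h1 : ‖(z + t • u) j‖ ≤ ‖z j‖ + ‖t‖ * ‖u j‖ := by
        simp only [Pi.add_apply, Pi.smul_apply, smul_eq_mul]
        calc ‖z j + t * u j‖ ≤ ‖z j‖ + ‖t * u j‖ :=
              norm_add_le _ _
          _ = ‖z j‖ + ‖t‖ * ‖u j‖ := by rw [norm_mul]
      have huj : ‖u j‖ ≤ ‖u‖ := by
        simpa using norm_le_pi_norm u j
      have h2 : ‖t‖ * ‖u j‖ ≤ ρ * ‖u‖ := by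
        rw [htabs]
        exact mul_le_mul_of_nonneg_left huj hρ0.le
      have h3 : ρ * ‖u‖ = 1 - r := div_mul_cancel₀ _ hd.ne'
      have h4 := (mem_polydisk_zero.1 hz) j
      calc ‖(z + t • u) j‖ ≤ ‖z j‖ + ρ * ‖u‖ := by linarith
        _ ≤ 1 := by rw [h3]; linarith
    have hcau : ‖deriv h 0‖ ≤ M / ρ :=
      Complex.norm_deriv_le_of_forall_mem_sphere_norm_le hρ0 hhd.diffContOnCl hsph
    rw [hderiv.deriv] at hcau
    calc ‖fderiv ℂ F z u‖ ≤ M / ρ := hcau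
      _ = M / (1 - r) * ‖u‖ := by
          rw [hρ_def]
          field_simp
  -- Lipschitz bound on the polydisk
  have hconv : Convex ℝ (polydisk n 0 r) := by
    rw [polydisk_zero_eq]
    exact convex_pi fun _ _ => convex_ball 0 r
  have hlip : ∀ x ∈ polydisk n 0 r, ∀ y ∈ polydisk n 0 r,
      ‖F x - F y‖ ≤ M / (1 - r) * dist x y := by
    intro x hx y hy
    rw [dist_eq_norm]
    exact hconv.norm_image_sub_le_of_norm_fderiv_le (fun w _ => hFdiff w) hgrad hy hx
  -- Y is nonempty
  have h0mem : (0 : Fin n → ℂ) ∈ polydisk n 0 r := mem_polydisk_zero.2 fun j => by simpa using hr0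
  obtain ⟨y0, hy0Y, _⟩ := hcover 0 h0mem
  obtain ⟨zA, hzAY, hzAmax⟩ := Finset.exists_max_image Y (fun y => ‖F y‖) ⟨y0, hy0Y⟩
  set A : ℝ := ‖F zA‖ with hA_def
  set C : ℝ := A + M / (1 - r) * ε with hC_def
  -- bound on the open polydisk
  have hC : ∀ x ∈ polydisk n 0 r, ‖F x‖ ≤ C := by
    intro x hx
    obtain ⟨y, hyY, hxy⟩ := hcover x hx
    have h1 : ‖F x‖ ≤ ‖F y‖ + ‖F x - F y‖ := by
      calc ‖F x‖ = ‖F y + (F x - F y)‖ := by ring_nf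
        _ ≤ ‖F y‖ + ‖F x - F y‖ := norm_add_le _ _
    have h2 := hlip x hx y (hYsub y hyY)
    have h3 : M / (1 - r) * dist x y ≤ M / (1 - r) * ε :=
      mul_le_mul_of_nonneg_left hxy (div_nonneg hM0 h1r.le)
    have h4 := hzAmax y hyY
    calc ‖F x‖ ≤ ‖F y‖ + ‖F x - F y‖ := h1
      _ ≤ A + M / (1 - r) * ε := by linarith
      _ = C := rfl
  have hC0 : 0 ≤ C := le_trans (norm_nonneg _) (hC 0 h0mem)
  -- Bernstein-type bound via maximum modulus
  have hBern : ∀ s : ℝ, s ∈ Set.Ioo (0 : ℝ) 1 → (s * r) ^ N * M ≤ C := by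
    intro s hs
    have hsr0 : 0 < s * r := mul_pos hs.1 hr0
    have hsr1 : s * r < 1 := by nlinarith [hs.2, hr0, hs.1]
    set g : ℂ → ℂ := fun t =>
      ∑ α ∈ P.support, (P.coeff α * ∏ j, w₀ j ^ α j) * t ^ (N - α.sum fun _ e => e) with hg_def
    have hgdiff : Differentiable ℂ g := by
      apply Differentiable.fun_sum
      intro α _
      exact (differentiable_pow _).const_mul _
    have hg1 : g 1 = F w₀ := by
      simp only [hg_def, hF_def, MvPolynomial.eval_eq']
      simp
    have hgt : ∀ t : ℂ, t ≠ 0 → g t = t ^ N * F (fun j => t⁻¹ * w₀ j) := by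
      intro t ht
      simp only [hg_def, hF_def, MvPolynomial.eval_eq', Finset.mul_sum]
      apply Finset.sum_congr rfl
      intro α hα
      have hdle : (α.sum fun _ e => e) ≤ N := le_trans (MvPolynomial.le_totalDegree hα) hP
      have hsum : (α.sum fun _ e => e) = ∑ j, α j := Finsupp.sum_fintype _ _ fun _ => rfl
      rw [hsum] at hdle ⊢
      have hprod : (∏ j, (t⁻¹ * w₀ j) ^ α j) = t⁻¹ ^ (∑ j, α j) * ∏ j, w₀ j ^ α j := by
        simp_rw [mul_pow]
        rw [Finset.prod_mul_distrib, Finset.prod_pow_eq_pow_sum]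
      rw [hprod]
      have hpow : t ^ (N - ∑ j, α j) = t ^ N * t⁻¹ ^ (∑ j, α j) := by
        rw [pow_sub₀ t ht hdle, inv_pow]
      rw [hpow]
      ring
    -- maximum modulus on the ball of radius 1/(s*r)
    set R : ℝ := 1 / (s * r) with hR_def
    have hR1 : 1 < R := by
      rw [hR_def]
      exact one_lt_one_div hsr0 hsr1
    have hR0 : 0 < R := lt_trans one_pos hR1
    have hfr : ∀ t ∈ frontier (ball (0 : ℂ) R), ‖g t‖ ≤ R ^ N * C := by
      rw [frontier_ball 0 hR0.ne']
      intro t ht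
      have htabs : ‖t‖ = R := by simpa [Complex.dist_eq] using ht
      have ht0 : t ≠ 0 := by
        intro h; rw [h] at htabs; simp at htabs; exact hR0.ne' htabs.symm
      have hxmem : (fun j => t⁻¹ * w₀ j) ∈ polydisk n 0 r := by
        apply mem_polydisk_zero.2
        intro j
        have : ‖t⁻¹ * w₀ j‖ = (s * r) * ‖w₀ j‖ := by
          rw [norm_mul, norm_inv, htabs, hR_def]
          simp
        rw [this]
        calc (s * r) * ‖w₀ j‖ ≤ (s * r) * 1 :=
              mul_le_mul_of_nonneg_left (hw₀K j) hsr0.le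
          _ = s * r := mul_one _
          _ < r := by nlinarith [hs.2]
      have := hC _ hxmem
      rw [hgt t ht0]
      rw [norm_mul, norm_pow, htabs]
      exact mul_le_mul_of_nonneg_left this (by positivity)
    have h1mem : (1 : ℂ) ∈ closure (ball (0 : ℂ) R) := by
      apply subset_closure
      simp only [mem_ball, Complex.dist_eq]
      simpa using hR1
    have := Complex.norm_le_of_forall_mem_frontier_norm_le isBounded_ball
      hgdiff.diffContOnCl hfr h1mem
    rw [hg1] at this
    -- ‖F w₀‖ = M ≤ R ^ N * C
    have hRC : M ≤ R ^ N * C := this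
    have hkey : (s * r) ^ N * M ≤ (s * r) ^ N * (R ^ N * C) :=
      mul_le_mul_of_nonneg_left hRC (by positivity)
    calc (s * r) ^ N * M ≤ (s * r) ^ N * (R ^ N * C) := hkey
      _ = C := by
          have h : (s * r) ^ N * R ^ N = 1 := by
            rw [hR_def, ← mul_pow, mul_one_div_cancel hsr0.ne', one_pow]
          calc (s * r) ^ N * (R ^ N * C) = (s * r) ^ N * R ^ N * C := by ring
            _ = C := by rw [h, one_mul]
  -- take the limit s → 1⁻
  have hlim : r ^ N * M ≤ C := by
    have htend : Tendsto (fun s : ℝ => (s * r) ^ N * M) (nhdsWithin 1 (Set.Iio 1))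
        (nhds ((1 * r) ^ N * M)) := by
      apply Tendsto.mono_left _ nhdsWithin_le_nhds
      exact (((continuous_id.mul continuous_const).pow N).mul continuous_const).tendsto 1
    rw [one_mul] at htend
    apply le_of_tendsto htend
    filter_upwards [Ioo_mem_nhdsLT_of_mem (show (1:ℝ) ∈ Set.Ioc 0 1 by constructor <;> norm_num)]
      with s hs
    exact hBern s hs
  -- final arithmetic
  refine ⟨zA, hzAY, ?_⟩
  have heps : M / (1 - r) * ε = M * r ^ N / (2 * N) := by
    rw [hε_def]
    field_simp
  rw [hC_def, heps] at hlim
  -- hlim : r ^ N * M ≤ A + M * r ^ N / (2 * N)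
  have h2N : (2 : ℝ) ≤ 2 * N := by
    have : (1 : ℝ) ≤ N := by exact_mod_cast hN
    linarith
  have hdiv : M * r ^ N / (2 * N) ≤ M * r ^ N / 2 :=
    div_le_div_of_nonneg_left (by positivity) two_pos h2N
  have hA2 : r ^ N * M - M * r ^ N / 2 ≤ A := by linarith
  have hMr : r ^ N ≤ r ^ N * M := by nlinarith
  have hgoal : (1 / 2) * r ^ N ≤ A := by nlinarith
  exact hgoal

theorem finite_norming_set (n : ℕ) (r : ℝ) (hr0 : 0 < r) (hr1 : r < 1)
    (N : ℕ) (hN : 0 < N) :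
    (∃ Y : Finset (Fin n → ℂ), (∀ z ∈ Y, z ∈ polydisk n 0 r) ∧
      ∀ P : MvPolynomial (Fin n) ℂ, P.totalDegree ≤ N →
        (∃ w : Fin n → ℂ, (∀ j, ‖w j‖ ≤ 1) ∧ 1 ≤ ‖MvPolynomial.eval w P‖) →
        ∃ z ∈ Y, (1 / 2) * r ^ N ≤ ‖MvPolynomial.eval z P‖) ∧
    (∀ Y : Finset (Fin n → ℂ), (∀ z ∈ Y, z ∈ polydisk n 0 r) →
      (∀ x ∈ Y, ∀ y ∈ Y, x ≠ y → ((1 - r) / (2 * N)) * r ^ N < dist x y) →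
      (∀ x ∈ polydisk n 0 r, ∃ y ∈ Y, dist x y ≤ ((1 - r) / (2 * N)) * r ^ N) →
      ∀ P : MvPolynomial (Fin n) ℂ, P.totalDegree ≤ N →
        (∃ w : Fin n → ℂ, (∀ j, ‖w j‖ ≤ 1) ∧ 1 ≤ ‖MvPolynomial.eval w P‖) →
        ∃ z ∈ Y, (1 / 2) * r ^ N ≤ ‖MvPolynomial.eval z P‖) := by
  constructor
  · -- construct a finite net via compactness
    set ε : ℝ := ((1 - r) / (2 * N)) * r ^ N with hε_def
    have h1r : (0 : ℝ) < 1 - r := by linarith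
    have hNpos : (0 : ℝ) < N := by exact_mod_cast hN
    have hε0 : 0 < ε := by positivity
    set K : Set (Fin n → ℂ) := Set.pi Set.univ (fun _ : Fin n => closedBall (0 : ℂ) r) with hK_def
    have hKc : IsCompact K := isCompact_univ_pi fun _ => isCompact_closedBall 0 r
    have hKcov : K ⊆ ⋃ x : polydisk n 0 r, ball (x : Fin n → ℂ) ε := by
      intro z hz
      -- scale z slightly
      set c : ℝ := 1 - min (ε / (2 * r)) (1 / 2) with hc_def
      have hmin0 : 0 < min (ε / (2 * r)) (1 / 2) := lt_min (by positivity) (by norm_num)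
      have hmin1 : min (ε / (2 * r)) (1 / 2) ≤ 1 / 2 := min_le_right _ _
      have hc0 : 0 < c := by rw [hc_def]; linarith
      have hc1 : c < 1 := by rw [hc_def]; linarith
      set x : Fin n → ℂ := fun j => (c : ℂ) * z j with hx_def
      have hxmem : x ∈ polydisk n 0 r := by
        apply mem_polydisk_zero.2
        intro j
        have hzj : ‖z j‖ ≤ r := by
          have := hz j (mem_univ j)
          simpa [Complex.dist_eq] using this
        have : ‖(c : ℂ) * z j‖ = c * ‖z j‖ := by
          rw [norm_mul, Complex.norm_real, Real.norm_eq_abs, abs_of_pos hc0]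
        rw [hx_def, this]
        calc c * ‖z j‖ ≤ c * r := mul_le_mul_of_nonneg_left hzj hc0.le
          _ < 1 * r := by nlinarith
          _ = r := one_mul r
      refine mem_iUnion.2 ⟨⟨x, hxmem⟩, ?_⟩
      simp only [mem_ball]
      have hdist : dist z x ≤ (1 - c) * r := by
        rw [dist_pi_le_iff (by nlinarith)]
        intro j
        have hzj : ‖z j‖ ≤ r := by
          have := hz j (mem_univ j)
          simpa [Complex.dist_eq] using this
        have : z j - x j = ((1 : ℂ) - c) * z j := by rw [hx_def]; ring
        rw [Complex.dist_eq, this, norm_mul]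
        have habs : ‖(1 : ℂ) - (c : ℝ)‖ = 1 - c := by
          rw [show ((1 : ℂ) - (c : ℝ)) = ((1 - c : ℝ) : ℂ) by push_cast; ring,
            Complex.norm_real, Real.norm_eq_abs, abs_of_pos (by linarith)]
        rw [habs]
        exact mul_le_mul_of_nonneg_left hzj (by linarith)
      have hbound : (1 - c) * r < ε := by
        have h1c : 1 - c = min (ε / (2 * r)) (1 / 2) := by rw [hc_def]; ring
        have hle : 1 - c ≤ ε / (2 * r) := h1c ▸ min_le_left _ _
        have : (1 - c) * r ≤ ε / (2 * r) * r := mul_le_mul_of_nonneg_right hle hr0.le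
        have heq : ε / (2 * r) * r = ε / 2 := by field_simp
        rw [heq] at this
        exact lt_of_le_of_lt this (half_lt_self hε0)
      calc dist z x ≤ (1 - c) * r := hdist
        _ < ε := hbound
    obtain ⟨t, ht⟩ := hKc.elim_finite_subcover
      (fun x : polydisk n 0 r => ball (x : Fin n → ℂ) ε) (fun _ => isOpen_ball) hKcov
    refine ⟨t.image Subtype.val, ?_, ?_⟩
    · intro z hz
      obtain ⟨⟨x, hx⟩, _, rfl⟩ := Finset.mem_image.1 hz
      exact hx
    · intro P hP hsup
      apply core_lemma n r hr0 hr1 N hN _ ?_ ?_ P hP hsup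
      · intro z hz
        obtain ⟨⟨x, hx⟩, _, rfl⟩ := Finset.mem_image.1 hz
        exact hx
      · intro x hx
        have hxK : x ∈ K := by
          intro j _
          have := mem_polydisk_zero.1 hx j
          simpa [Complex.dist_eq] using this.le
        have := ht hxK
        obtain ⟨i, hi⟩ := mem_iUnion.1 this
        obtain ⟨hit, hxi⟩ := mem_iUnion.1 hi
        refine ⟨i.val, Finset.mem_image.2 ⟨i, hit, rfl⟩, ?_⟩
        exact le_of_lt (by simpa [mem_ball] using hxi)
  · intro Y hYsub _ hcover P hP hsup
    exact core_lemma n r hr0 hr1 N hN Y hYsub hcover P hP hsup
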